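/- Consider the network SIR system s' = -β diag(s)Ax, x' = β diag(s)Ax - γx. Fix τ ≥ 0 and let λ(τ) and v(τ) ≫ 0 be the Perron eigenvalue and left Perron eigenvector of diag(s(τ))A. If βλ(τ) < γ, then for t ≥ τ the weighted average v(τ)^⊤ x(t) satisfies v(τ)^⊤x(t) ≤ (v(τ)^⊤x(τ))·e^{(βλ(τ)-γ)(t-τ)}, hence decays exponentially to zero. -/

import Mathlib

/-- A nonnegative matrix is irreducible (its digraph is strongly connected). -/
def MatIrreducible {n : ℕ} (A : Matrix (Fin n) (Fin n) ℝ) : Prop :=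
  ∀ i j : Fin n, ∃ k : ℕ, 0 < (A ^ k) i j

/-- For the network SIR system, fix τ ≥ 0 and let λ(τ), v(τ) ≫ 0 be
the Perron eigenvalue and left Perron eigenvector of diag(s(τ))A. If βλ(τ) < γ,
then for t ≥ τ, v(τ)ᵀx(t) ≤ (v(τ)ᵀx(τ))·e^{(βλ(τ)-γ)(t-τ)}. -/
theorem network_SIR_below_threshold_decay
    {n : ℕ} (A : Matrix (Fin n) (Fin n) ℝ)
    (hA : ∀ i j, 0 ≤ A i j) (hirr : MatIrreducible A)
    (β γ : ℝ) (hβ : 0 < β) (hγ : 0 < γ)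
    (s x : ℝ → Fin n → ℝ) (τ : ℝ) (hτ : 0 ≤ τ)
    (lam : ℝ) (v : Fin n → ℝ) (hv : ∀ i, 0 < v i)
    (heig : ∀ j, ∑ i, v i * (s τ i * A i j) = lam * v j)
    (hthr : β * lam < γ)
    (hxpos : ∀ t : ℝ, τ ≤ t → ∀ i, 0 ≤ x t i)
    (hsmono : ∀ t₁ t₂ : ℝ, τ ≤ t₁ → t₁ ≤ t₂ → ∀ i, s t₂ i ≤ s t₁ i)
    (hderivs : ∀ t : ℝ, τ ≤ t → ∀ i,
      HasDerivAt (fun u => s u i) (-(β * s t i * ∑ j, A i j * x t j)) t)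
    (hderivx : ∀ t : ℝ, τ ≤ t → ∀ i,
      HasDerivAt (fun u => x u i)
        (β * s t i * (∑ j, A i j * x t j) - γ * x t i) t) :
    ∀ t : ℝ, τ ≤ t →
      ∑ i, v i * x t i ≤ (∑ i, v i * x τ i) * Real.exp ((β * lam - γ) * (t - τ)) := by
  intro t ht
  set c : ℝ := β * lam - γ with hc
  set V : ℝ → ℝ := fun u => ∑ i, v i * x u i with hVdef
  have hVderiv : ∀ u, τ ≤ u → HasDerivAt V
      (∑ i, v i * (β * s u i * (∑ j, A i j * x u j) - γ * x u i)) u := by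
    intro u hu
    exact HasDerivAt.fun_sum fun i _ => (hderivx u hu i).const_mul (v i)
  have hbound : ∀ u, τ ≤ u →
      (∑ i, v i * (β * s u i * (∑ j, A i j * x u j) - γ * x u i)) ≤ c * V u := by
    intro u hu
    have h1 : ∑ i, v i * (β * s u i * (∑ j, A i j * x u j))
        ≤ ∑ i, v i * (β * s τ i * (∑ j, A i j * x u j)) := by
      apply Finset.sum_le_sum
      intro i _
      have hT : 0 ≤ ∑ j, A i j * x u j :=
        Finset.sum_nonneg fun j _ => mul_nonneg (hA i j) (hxpos u hu j)
      have hs := hsmono τ u le_rfl hu i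
      nlinarith [(hv i).le, hβ.le, mul_nonneg (mul_nonneg (hv i).le hβ.le) hT]
    have h2 : ∑ i, v i * (β * s τ i * (∑ j, A i j * x u j))
        = β * (lam * V u) := by
      have step1 : ∀ i, v i * (β * s τ i * (∑ j, A i j * x u j))
          = ∑ j, (v i * (s τ i * A i j)) * (β * x u j) := by
        intro i
        rw [Finset.mul_sum, Finset.mul_sum]
        exact Finset.sum_congr rfl fun j _ => by ring
      rw [Finset.sum_congr rfl fun i _ => step1 i, Finset.sum_comm]
      have step2 : ∀ j, (∑ i, (v i * (s τ i * A i j)) * (β * x u j))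
          = lam * v j * (β * x u j) := by
        intro j
        rw [← Finset.sum_mul, heig j]
      rw [Finset.sum_congr rfl fun j _ => step2 j]
      simp only [hVdef, Finset.mul_sum]
      exact Finset.sum_congr rfl fun j _ => by ring
    have expand : ∑ i, v i * (β * s u i * (∑ j, A i j * x u j) - γ * x u i)
        = (∑ i, v i * (β * s u i * (∑ j, A i j * x u j))) - γ * V u := by
      have hgV : γ * V u = ∑ i, γ * (v i * x u i) := Finset.mul_sum _ _ _
      rw [hgV, ← Finset.sum_sub_distrib]
      exact Finset.sum_congr rfl fun i _ => by ring
    have hcv : c * V u = β * (lam * V u) - γ * V u := by rw [hc]; ring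
    linarith
  have hder : ∀ u, τ ≤ u → HasDerivAt (fun u => V u * Real.exp (-c * (u - τ)))
      ((∑ i, v i * (β * s u i * (∑ j, A i j * x u j) - γ * x u i)) *
        Real.exp (-c * (u - τ)) + V u * (Real.exp (-c * (u - τ)) * (-c))) u := by
    intro u hu
    have := (hVderiv u hu).mul ((((hasDerivAt_id u).sub_const τ).const_mul (-c)).exp)
    simp at this ⊢
    exact this
  have hanti : AntitoneOn (fun u => V u * Real.exp (-c * (u - τ))) (Set.Ici τ) := by
    apply antitoneOn_of_deriv_nonpos (convex_Ici τ)
    · intro u hu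
      exact (hder u hu).continuousAt.continuousWithinAt
    · intro u hu
      rw [interior_Ici] at hu
      exact (hder u hu.le).differentiableAt.differentiableWithinAt
    · intro u hu
      rw [interior_Ici] at hu
      rw [(hder u hu.le).deriv]
      have hb := hbound u hu.le
      have he : (0:ℝ) < Real.exp (-c * (u - τ)) := Real.exp_pos _
      nlinarith [mul_le_mul_of_nonneg_right hb he.le]
  have h3 : V t * Real.exp (-c * (t - τ)) ≤ V τ := by
    have := hanti Set.self_mem_Ici (Set.mem_Ici.mpr ht) ht
    simpa using this
  have hfin : V t ≤ V τ * Real.exp (c * (t - τ)) := by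
    calc V t = V t * Real.exp (-c * (t - τ)) * Real.exp (c * (t - τ)) := by
          rw [mul_assoc, ← Real.exp_add, show -c * (t - τ) + c * (t - τ) = 0 by ring,
            Real.exp_zero, mul_one]
      _ ≤ V τ * Real.exp (c * (t - τ)) :=
          mul_le_mul_of_nonneg_right h3 (Real.exp_pos _).le
  simpa [hc] using hfin
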